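/- For every β ∈ (1, 11/8], the class 𝒫(β) = {f = h + conj(g) : h, g analytic on 𝔻, h(0)=g(0)=0, h'(0)=1, g'=z·h', and Re(1 + z h''(z)/h'(z)) < β on 𝔻} contains a function that is not injective on 𝔻. -/

import Mathlib

open Complex Metric Real

lemma aux_slit {z : ℂ} (hz : z ∈ ball (0:ℂ) 1) : (1 - z) ∈ Complex.slitPlane := by
  rw [mem_ball_zero_iff] at hz
  refine Complex.mem_slitPlane_iff.2 (Or.inl ?_)
  have : z.re ≤ ‖z‖ := Complex.re_le_norm z
  simp only [Complex.sub_re, Complex.one_re]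
  linarith

lemma aux_hd {z : ℂ} (c : ℂ) (hz : (1 - z) ∈ Complex.slitPlane) :
    HasDerivAt (fun w : ℂ => (1-w) ^ c) (c * (1-z) ^ (c-1) * (-1)) z := by
  have h1 : HasDerivAt (fun w : ℂ => 1 - w) (0 - 1) z :=
    (hasDerivAt_const z (1:ℂ)).sub (hasDerivAt_id z)
  simpa using HasDerivAt.cpow_const h1 hz

lemma aux_re {z : ℂ} (hz : z ∈ ball (0:ℂ) 1) : -(1/2) < (z / (1 - z)).re := by
  rw [mem_ball_zero_iff] at hz
  have h1 : Complex.normSq z < 1 := by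
    have := Complex.sq_norm z
    nlinarith [norm_nonneg z]
  have hne : (1:ℂ) - z ≠ 0 := by
    intro h
    have : z = 1 := by linear_combination -h
    rw [this] at h1; simp [Complex.normSq] at h1
  have hN : 0 < Complex.normSq (1 - z) := Complex.normSq_pos.2 hne
  rw [Complex.div_re]
  rw [Complex.normSq_apply] at h1 hN ⊢
  simp only [Complex.sub_re, Complex.sub_im, Complex.one_re, Complex.one_im] at *
  rw [← add_div, neg_lt, ← neg_div, div_lt_iff₀ hN]
  nlinarith

theorem stmt_8 (β : ℝ) (hβ : 1 < β ∧ β ≤ 11/8) :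
    ∃ h g : ℂ → ℂ,
      AnalyticOnNhd ℂ h (ball (0 : ℂ) 1) ∧
      AnalyticOnNhd ℂ g (ball (0 : ℂ) 1) ∧
      h 0 = 0 ∧ g 0 = 0 ∧ deriv h 0 = 1 ∧
      (∀ z ∈ ball (0 : ℂ) 1, deriv g z = z * deriv h z) ∧
      (∀ z ∈ ball (0 : ℂ) 1, (1 + z * deriv (deriv h) z / deriv h z).re < β) ∧
      ∃ z₁ ∈ ball (0 : ℂ) 1, ∃ z₂ ∈ ball (0 : ℂ) 1,
        z₁ ≠ z₂ ∧ h z₁ + starRingEnd ℂ (g z₁) = h z₂ + starRingEnd ℂ (g z₂) := by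
  obtain ⟨hβ1, hβ2⟩ := hβ
  set γ : ℝ := 2*β - 1 with hγdef
  have hγ1 : 1 < γ := by simp only [hγdef]; linarith
  have hγ2 : γ ≤ 7/4 := by simp only [hγdef]; linarith
  set c : ℂ := (γ : ℂ) with hcdef
  have hc0 : c ≠ 0 := by
    simp only [hcdef, ne_eq, Complex.ofReal_eq_zero]; linarith
  have hc1 : c + 1 ≠ 0 := by
    simp only [hcdef]
    intro h
    have : ((γ + 1 : ℝ) : ℂ) = 0 := by push_cast; linear_combination h
    rw [Complex.ofReal_eq_zero] at this; linarith
  refine ⟨fun z => (1 - (1-z)^c)/c, fun z => (1 - (1 + c*z)*(1-z)^c)/(c*(c+1)),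
    ?_, ?_, ?_, ?_, ?_, ?_, ?_, ?_⟩
  case _ => -- h analytic
    intro z hz
    exact ((analyticAt_const.sub
      ((analyticAt_const.sub analyticAt_id).cpow analyticAt_const (aux_slit hz)))).div
      analyticAt_const hc0
  case _ => -- g analytic
    intro z hz
    exact (analyticAt_const.sub
      ((analyticAt_const.add (analyticAt_const.mul analyticAt_id)).mul
        ((analyticAt_const.sub analyticAt_id).cpow analyticAt_const (aux_slit hz)))).div
      analyticAt_const (mul_ne_zero hc0 hc1)
  case _ => simp
  case _ => simp
  case _ => -- deriv h 0 = 1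
    have hz : (0:ℂ) ∈ ball (0:ℂ) 1 := by simp
    have hd : HasDerivAt (fun z : ℂ => (1 - (1-z)^c)/c) ((1-(0:ℂ))^(c-1)) 0 := by
      have := ((hasDerivAt_const (0:ℂ) (1:ℂ)).sub (aux_hd c (aux_slit hz))).div_const c
      convert this using 1
      rfl; rfl; rfl
      field_simp
      ring
    rw [hd.deriv]
    simp
  case _ => -- deriv g = z * deriv h
    intro z hz
    have hslit := aux_slit hz
    have hne : (1:ℂ) - z ≠ 0 := Complex.slitPlane_ne_zero hslit
    have hdh : HasDerivAt (fun z : ℂ => (1 - (1-z)^c)/c) ((1-z)^(c-1)) z := by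
      have := ((hasDerivAt_const z (1:ℂ)).sub (aux_hd c hslit)).div_const c
      convert this using 1
      rfl; rfl; rfl
      field_simp
      ring
    have hdg : HasDerivAt (fun z : ℂ => (1 - (1 + c*z)*(1-z)^c)/(c*(c+1)))
        (z * (1-z)^(c-1)) z := by
      have hp : HasDerivAt (fun w : ℂ => 1 + c*w) c z := by
        simpa using (hasDerivAt_id z).const_mul c
      have := ((hasDerivAt_const z (1:ℂ)).sub
        (hp.mul (aux_hd c hslit))).div_const (c*(c+1))
      convert this using 1
      rfl; rfl; rfl
      have hsplit : (1-z)^c = (1-z)^(c-1) * (1-z) := by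
        have h2 := Complex.cpow_add (c-1) 1 hne
        rw [Complex.cpow_one] at h2
        have h3 : c - 1 + 1 = c := by ring
        rw [h3] at h2
        exact h2
      rw [hsplit]
      field_simp
      ring
    rw [hdg.deriv, hdh.deriv]
  case _ => -- Re condition
    intro z hz
    have hslit := aux_slit hz
    have hne : (1:ℂ) - z ≠ 0 := Complex.slitPlane_ne_zero hslit
    have hdh : ∀ w ∈ ball (0:ℂ) 1,
        HasDerivAt (fun z : ℂ => (1 - (1-z)^c)/c) ((1-w)^(c-1)) w := by
      intro w hw
      have := ((hasDerivAt_const w (1:ℂ)).sub (aux_hd c (aux_slit hw))).div_const c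
      convert this using 1
      rfl; rfl; rfl
      field_simp
      ring
    have hderiv1 : deriv (fun z : ℂ => (1 - (1-z)^c)/c) z = (1-z)^(c-1) := (hdh z hz).deriv
    have hderiv2 : deriv (deriv (fun z : ℂ => (1 - (1-z)^c)/c)) z
        = (c-1) * (1-z)^(c-1-1) * (-1) := by
      have hev : deriv (fun z : ℂ => (1 - (1-z)^c)/c) =ᶠ[nhds z]
          (fun w => (1-w)^(c-1)) := by
        filter_upwards [isOpen_ball.mem_nhds hz] with w hw
        exact (hdh w hw).deriv
      rw [hev.deriv_eq]
      exact (aux_hd (c-1) hslit).deriv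
    rw [hderiv1, hderiv2]
    have hpow_ne : (1-z)^(c-1) ≠ 0 := by
      rw [ne_eq, Complex.cpow_eq_zero_iff]
      tauto
    have hsimp : 1 + z * ((c-1) * (1-z)^(c-1-1) * (-1)) / (1-z)^(c-1)
        = 1 - (c-1) * (z / (1-z)) := by
      rw [show c-1-1 = (c-1)-1 by ring, Complex.cpow_sub _ _ hne, Complex.cpow_one]
      field_simp
      ring
    rw [hsimp]
    have hre : (1 - (c-1) * (z / (1-z))).re = 1 - (γ-1) * (z/(1-z)).re := by
      have : c - 1 = ((γ - 1 : ℝ) : ℂ) := by simp [hcdef]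
      rw [this]
      simp [Complex.sub_re, Complex.re_ofReal_mul]
    rw [hre]
    have := aux_re hz
    have hγ1' : (0:ℝ) < γ - 1 := by linarith
    nlinarith
  case _ => -- non-injectivity
    set θ : ℝ := π / (γ + 1) with hθdef
    have hγp : (2:ℝ) < γ + 1 := by linarith
    have hθpos : 0 < θ := div_pos Real.pi_pos (by linarith)
    have hθlt : θ < π/2 := by
      rw [hθdef]
      exact div_lt_div_of_pos_left Real.pi_pos two_pos hγp
    have hθpi : θ < π := lt_trans hθlt (by linarith [Real.pi_pos])
    set r : ℝ := Real.cos θ with hrdef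
    have hr : 0 < r := Real.cos_pos_of_mem_Ioo ⟨by linarith, hθlt⟩
    have hsin : 0 < Real.sin θ := Real.sin_pos_of_pos_of_lt_pi hθpos hθpi
    set w : ℂ := (r : ℂ) * (Complex.cos θ + Complex.sin θ * I) with hwdef
    have hwre : w.re = r * Real.cos θ := by
      simp [hwdef, Complex.cos_ofReal_re, Complex.sin_ofReal_re, Complex.mul_re,
        Complex.add_re, Complex.mul_im, Complex.cos_ofReal_im, Complex.sin_ofReal_im]
    have hwim : w.im = r * Real.sin θ := by
      simp [hwdef, Complex.cos_ofReal_re, Complex.sin_ofReal_re, Complex.mul_re,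
        Complex.add_im, Complex.mul_im, Complex.cos_ofReal_im, Complex.sin_ofReal_im]
    have harg : Complex.arg w = θ :=
      Complex.arg_mul_cos_add_sin_mul_I hr ⟨by linarith [Real.pi_pos], le_of_lt hθpi⟩
    have habs : ‖w‖ = r := by
      rw [hwdef]
      rw [norm_mul, Complex.norm_cos_add_sin_mul_I, Complex.norm_real, Real.norm_eq_abs, abs_of_pos hr, mul_one]
    have hw0 : w ≠ 0 := by
      intro h
      rw [h] at habs
      simp at habs
      linarith [habs ▸ hr]
    have hlog : Complex.log w = (Real.log r : ℂ) + θ * I := by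
      rw [Complex.log, habs, harg]
    have hexp : (Complex.log w) * (c + 1) = ((γ+1) * Real.log r : ℝ) + π * I := by
      rw [hlog, hcdef]
      have hθπ : (γ + 1) * θ = π := by
        rw [hθdef]
        field_simp
      have : ((γ:ℂ) + 1) * (θ:ℂ) = (π:ℂ) := by
        exact_mod_cast congrArg (fun x : ℝ => (x : ℂ)) hθπ
      push_cast
      linear_combination I * this
    have hwc1 : w ^ (c+1) = -((Real.exp ((γ+1) * Real.log r) : ℝ) : ℂ) := by
      rw [Complex.cpow_def_of_ne_zero hw0, hexp, Complex.exp_add, Complex.exp_pi_mul_I,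
        Complex.ofReal_exp]
      ring
    have hreal : (starRingEnd ℂ) (w^(c+1)) = w^(c+1) := by
      rw [hwc1, map_neg, Complex.conj_ofReal]
    have hkey : w * w^c = (starRingEnd ℂ) w * (starRingEnd ℂ) (w^c) := by
      have h1 : w * w^c = w^(c+1) := by
        rw [Complex.cpow_add _ _ hw0, Complex.cpow_one]; ring
      rw [← map_mul, h1, hreal]
    have hconjc : (starRingEnd ℂ) c = c := by
      rw [hcdef, Complex.conj_ofReal]
    have hBc : ((starRingEnd ℂ) w) ^ c = (starRingEnd ℂ) (w ^ c) := by
      have := Complex.conj_cpow w c (by rw [harg]; intro h; linarith)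
      rwa [hconjc] at this
    -- membership
    have hnormSq : Complex.normSq (1 - w) = Real.sin θ ^ 2 := by
      rw [Complex.normSq_apply]
      simp only [Complex.sub_re, Complex.sub_im, Complex.one_re, Complex.one_im]
      rw [hwre, hwim, hrdef]
      have := Real.sin_sq_add_cos_sq θ
      nlinarith
    have hmem : (1 - w) ∈ ball (0:ℂ) 1 := by
      rw [mem_ball_zero_iff]
      have h1 : ‖1-w‖ ^ 2 = Real.sin θ ^ 2 := by
        rw [Complex.sq_norm, hnormSq]
      have h2 : Real.sin θ ^ 2 < 1 := by
        have := Real.sin_sq_add_cos_sq θ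
        nlinarith
      nlinarith [norm_nonneg (1-w)]
    have hmem2 : (1 - (starRingEnd ℂ) w) ∈ ball (0:ℂ) 1 := by
      have : (1 : ℂ) - (starRingEnd ℂ) w = (starRingEnd ℂ) (1 - w) := by
        rw [map_sub, map_one]
      rw [this, mem_ball_zero_iff, Complex.norm_conj]
      rw [mem_ball_zero_iff] at hmem
      exact hmem
    refine ⟨1 - w, hmem, 1 - (starRingEnd ℂ) w, hmem2, ?_, ?_⟩
    · intro h
      have him : w.im = -w.im := by
        have := congrArg Complex.im h
        simp [Complex.sub_im, Complex.conj_im] at this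
        linarith [this]
      rw [hwim] at him
      nlinarith
    · beta_reduce
      have e1 : (1:ℂ) - (1 - w) = w := by ring
      have e2 : (1:ℂ) - (1 - (starRingEnd ℂ) w) = (starRingEnd ℂ) w := by ring
      rw [e1, e2, hBc]
      have hc2 : (starRingEnd ℂ) (c*(c+1)) = c*(c+1) := by
        rw [map_mul, map_add, hconjc, map_one]
      have hL : (starRingEnd ℂ) ((1 - (1 + c*(1-w)) * w^c)/(c*(c+1)))
          = (1 - (1 + c*(1 - (starRingEnd ℂ) w)) * (starRingEnd ℂ) (w^c))/(c*(c+1)) := by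
        rw [map_div₀, map_sub, map_one, map_mul, map_add, map_one, map_mul, map_sub,
          map_one, hconjc, hc2]
      have hR : (starRingEnd ℂ) ((1 - (1 + c*(1-(starRingEnd ℂ) w)) * (starRingEnd ℂ) (w^c))/(c*(c+1)))
          = (1 - (1 + c*(1-w)) * (w^c))/(c*(c+1)) := by
        rw [map_div₀, map_sub, map_one, map_mul, map_add, map_one, map_mul, map_sub,
          map_one, hconjc, hc2, Complex.conj_conj, Complex.conj_conj]
      rw [hL, hR]
      set A := w ^ c with hA
      set B := (starRingEnd ℂ) A with hB
      set wb := (starRingEnd ℂ) w with hwb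
      clear_value B
      clear_value A
      clear_value wb
      clear hL hR hBc hreal hwc1 hexp hlog habs harg hwim hwre hwdef hw0
      clear_value w
      clear_value c
      clear hcdef
      rw [div_add_div _ _ hc0 (mul_ne_zero hc0 hc1), div_add_div _ _ hc0 (mul_ne_zero hc0 hc1),
        div_eq_div_iff (mul_ne_zero hc0 (mul_ne_zero hc0 hc1))
          (mul_ne_zero hc0 (mul_ne_zero hc0 hc1))]
      linear_combination (-c^4*(c+1)) * hkey
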